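/- In the discrete uncorrelated reduction instance, suppose W is not a subset sum, i.e., there is no S ⊆ {1,…,m} with Σ_{i∈S} w_i = W, and let V be the largest subset sum with V < W. Then f(b) = −M − V + (ε/M)(b − V − ε) for all b ∈ [W, W + 2ε]; in particular, f is strictly increasing on [W, W + 2ε] and its unique maximizer over this interval is b = W + 2ε. -/
import Mathlib


noncomputable section

/-- Feasibility for the follower's continuous knapsack problem. -/
def feasibleKP {n : ℕ} (a : Fin n → ℝ) (b : ℝ) (x : Fin n → ℝ) : Prop :=
  (∑ i, a i * x i) ≤ b ∧ ∀ i, 0 ≤ x i ∧ x i ≤ 1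

/-- Optimality for the follower's continuous knapsack problem with profits `c`. -/
def optimalKP {n : ℕ} (a c : Fin n → ℝ) (b : ℝ) (x : Fin n → ℝ) : Prop :=
  feasibleKP a b x ∧ ∀ y, feasibleKP a b y → ∑ i, c i * y i ≤ ∑ i, c i * x i

/-- The constant `ε = 1/4` of the reduction instance. -/
def eps : ℝ := 1 / 4

/-- The constant `M = ∑ wᵢ + ε` of the reduction instance. -/
def Mval (m : ℕ) (w : Fin m → ℤ) : ℝ := (∑ i, (w i : ℝ)) + eps

/-- Item sizes `a = (ε, w₁, …, w_m, M)` of the reduction instance. -/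
def avec (m : ℕ) (w : Fin m → ℤ) : Fin (m + 2) → ℝ := fun i =>
  if h0 : (i : ℕ) = 0 then eps
  else if h1 : (i : ℕ) = m + 1 then Mval m w
  else (w ⟨(i : ℕ) - 1, by have := i.isLt; omega⟩ : ℝ)

/-- Leader's item values `d = (−M, −w₁, …, −w_m, ε)` of the reduction instance. -/
def dvec (m : ℕ) (w : Fin m → ℤ) : Fin (m + 2) → ℝ := fun i =>
  if h0 : (i : ℕ) = 0 then -Mval m w
  else if h1 : (i : ℕ) = m + 1 then eps
  else -(w ⟨(i : ℕ) - 1, by have := i.isLt; omega⟩ : ℝ)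

/-- Membership in the discrete uncorrelated uncertainty set
`U = ∏_{i=1}^{n} {i·aᵢ, (n+i)·aᵢ}` (with `n = m + 2` and 1-based indices). -/
def inU (m : ℕ) (w : Fin m → ℤ) (c : Fin (m + 2) → ℝ) : Prop :=
  ∀ i : Fin (m + 2),
    c i = ((i : ℕ) + 1) * avec m w i ∨ c i = ((m + 2) + ((i : ℕ) + 1)) * avec m w i

/-- The leader's objective `f(b) = min_{c ∈ U} min { dᵀx : x optimal for c }`
of the reduction instance (pessimistic view). -/
def fval (m : ℕ) (w : Fin m → ℤ) (b : ℝ) : ℝ :=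
  sInf {v : ℝ | ∃ c x : Fin (m + 2) → ℝ,
    inU m w c ∧ optimalKP (avec m w) c b x ∧ v = ∑ i, dvec m w i * x i}

/-- `V` is a subset sum of `{w₁, …, w_m}`. -/
def isSubsetSum (m : ℕ) (w : Fin m → ℤ) (V : ℝ) : Prop :=
  ∃ S : Finset (Fin m), V = ∑ i ∈ S, (w i : ℝ)


lemma sum_mul_update {n : ℕ} (f x : Fin n → ℝ) (i : Fin n) (u : ℝ) :
    ∑ k, f k * Function.update x i u k = (∑ k, f k * x k) + f i * (u - x i) := by
  classical
  have h : (fun k => f k * Function.update x i u k)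
      = Function.update (fun k => f k * x k) i (f i * u) := by
    ext k
    by_cases h : k = i
    · subst h; simp
    · simp [Function.update_of_ne h]
  rw [h, Finset.sum_update_of_mem (Finset.mem_univ i)]
  rw [Finset.sdiff_singleton_eq_erase, ← Finset.add_sum_erase _ (fun k => f k * x k)
    (Finset.mem_univ i)]
  ring

/-- Optimal solutions use the whole budget when total size exceeds it. -/
lemma tightKP {n : ℕ} {a c : Fin n → ℝ} {b : ℝ} {x : Fin n → ℝ}
    (ha : ∀ i, 0 < a i) (hc : ∀ i, 0 < c i)
    (hb : b < ∑ i, a i) (hopt : optimalKP a c b x) :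
    ∑ i, a i * x i = b := by
  obtain ⟨⟨hsum, hbox⟩, hbest⟩ := hopt
  by_contra hne
  have hlt : ∑ i, a i * x i < b := lt_of_le_of_ne hsum hne
  have hex : ∃ i, x i < 1 := by
    by_contra h
    push_neg at h
    have h1 : ∀ i, x i = 1 := fun i => le_antisymm (hbox i).2 (h i)
    have h2 : ∑ i, a i * x i = ∑ i, a i :=
      Finset.sum_congr rfl fun i _ => by rw [h1 i, mul_one]
    linarith
  obtain ⟨i0, hi0⟩ := hex
  set s := ∑ j, a j * x j with hs
  set δ := min (1 - x i0) ((b - s) / a i0) with hδ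
  have hδpos : 0 < δ := lt_min (by linarith) (div_pos (by linarith) (ha i0))
  set y := Function.update x i0 (x i0 + δ) with hy
  have hay : ∑ j, a j * y j = s + a i0 * δ := by
    rw [hy, sum_mul_update]; ring
  have hcy : ∑ j, c j * y j = (∑ j, c j * x j) + c i0 * δ := by
    rw [hy, sum_mul_update]; ring
  have hfy : feasibleKP a b y := by
    constructor
    · rw [hay]
      have h4 : δ ≤ (b - s) / a i0 := min_le_right _ _
      have h5 := (le_div_iff₀ (ha i0)).mp h4
      linarith
    · intro k
      by_cases h : k = i0
      · rw [h, hy, Function.update_self]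
        have h1 : δ ≤ 1 - x i0 := min_le_left _ _
        exact ⟨by linarith [(hbox i0).1], by linarith⟩
      · rw [hy, Function.update_of_ne h]
        exact hbox k
  have hle := hbest y hfy
  rw [hcy] at hle
  nlinarith [hc i0]

/-- Exchange: if item `i` has strictly larger ratio than `j` and `x j > 0`, then `x i = 1`. -/
lemma exchangeKP {n : ℕ} {a c : Fin n → ℝ} {b : ℝ} {x : Fin n → ℝ}
    (ha : ∀ i, 0 < a i) (hopt : optimalKP a c b x)
    {i j : Fin n} (hr : c j * a i < c i * a j) (hxj : 0 < x j) : x i = 1 := by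
  obtain ⟨⟨hsum, hbox⟩, hbest⟩ := hopt
  by_contra hne
  have hxi : x i < 1 := lt_of_le_of_ne (hbox i).2 hne
  have hij : i ≠ j := by
    rintro rfl
    exact absurd hr (lt_irrefl _)
  set δ := min (1 - x i) (x j * a j / a i) with hδ
  have hδpos : 0 < δ :=
    lt_min (by linarith) (div_pos (mul_pos hxj (ha j)) (ha i))
  set y := Function.update (Function.update x i (x i + δ)) j (x j - δ * a i / a j) with hy
  have hval : ∀ f : Fin n → ℝ, ∑ k, f k * y k
      = (∑ k, f k * x k) + f i * δ - f j * (δ * a i / a j) := by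
    intro f
    rw [hy, sum_mul_update, sum_mul_update, Function.update_of_ne (Ne.symm hij)]
    ring
  have hyi : y i = x i + δ := by
    rw [hy, Function.update_of_ne hij, Function.update_self]
  have hyj : y j = x j - δ * a i / a j := by
    rw [hy, Function.update_self]
  have haj0 : a j ≠ 0 := ne_of_gt (ha j)
  have hai0 : a i ≠ 0 := ne_of_gt (ha i)
  have h3 : δ * a i / a j ≤ x j := by
    rw [div_le_iff₀ (ha j)]
    have h2 : δ ≤ x j * a j / a i := min_le_right _ _
    calc δ * a i ≤ (x j * a j / a i) * a i :=
          mul_le_mul_of_nonneg_right h2 (ha i).le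
      _ = x j * a j := div_mul_cancel₀ _ hai0
  have hfy : feasibleKP a b y := by
    constructor
    · rw [hval a]
      have hcc : a j * (δ * a i / a j) = δ * a i := by
        rw [mul_comm (a j)]
        exact div_mul_cancel₀ _ haj0
      linarith
    · intro k
      by_cases hk : k = j
      · rw [hk, hyj]
        refine ⟨by linarith, ?_⟩
        have : 0 ≤ δ * a i / a j := div_nonneg (mul_nonneg hδpos.le (ha i).le) (ha j).le
        linarith [(hbox j).2]
      · by_cases hk2 : k = i
        · rw [hk2, hyi]
          have h1 : δ ≤ 1 - x i := min_le_left _ _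
          exact ⟨by linarith [(hbox i).1], by linarith⟩
        · have hyk : y k = x k := by
            rw [hy, Function.update_of_ne hk, Function.update_of_ne hk2]
          rw [hyk]; exact hbox k
  have hle := hbest y hfy
  rw [hval c] at hle
  have hδaj : 0 < δ / a j := div_pos hδpos (ha j)
  have hkey : c j * (δ * a i / a j) < c i * δ := by
    calc c j * (δ * a i / a j) = (c j * a i) * (δ / a j) := by ring
      _ < (c i * a j) * (δ / a j) := mul_lt_mul_of_pos_right hr hδaj
      _ = c i * δ * (a j / a j) := by ring
      _ = c i * δ := by rw [div_self haj0, mul_one]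
  linarith

/-- LP optimality certificate for the continuous knapsack. -/
lemma certificateKP {n : ℕ} {a c : Fin n → ℝ} {b r : ℝ} {x : Fin n → ℝ}
    (hr : 0 < r) (hfx : feasibleKP a b x) (htight : ∑ i, a i * x i = b)
    (hcomp : ∀ i, (r * a i < c i → x i = 1) ∧ (c i < r * a i → x i = 0)) :
    optimalKP a c b x := by
  refine ⟨hfx, fun y hy => ?_⟩
  have per : ∀ i, (c i - r * a i) * y i ≤ (c i - r * a i) * x i := by
    intro i
    rcases lt_trichotomy (c i) (r * a i) with h | h | h
    · rw [(hcomp i).2 h]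
      nlinarith [(hy.2 i).1]
    · rw [h]; simp
    · rw [(hcomp i).1 h]
      nlinarith [(hy.2 i).2]
  have hsum : ∑ i, (c i - r * a i) * y i ≤ ∑ i, (c i - r * a i) * x i :=
    Finset.sum_le_sum (fun i _ => per i)
  have h2 : ∀ z : Fin n → ℝ, ∑ i, (c i - r * a i) * z i
      = (∑ i, c i * z i) - r * ∑ i, a i * z i := by
    intro z
    rw [Finset.mul_sum, ← Finset.sum_sub_distrib]
    exact Finset.sum_congr rfl fun i _ => by ring
  rw [h2, h2] at hsum
  have hay : ∑ i, a i * y i ≤ b := hy.1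
  nlinarith [mul_le_mul_of_nonneg_left hay hr.le]


/-- The middle index `j+1` of `Fin (m+2)`. -/
def midIdx (m : ℕ) (j : Fin m) : Fin (m + 2) := ⟨(j : ℕ) + 1, by omega⟩

lemma midIdx_val (m : ℕ) (j : Fin m) : ((midIdx m j : Fin (m+2)) : ℕ) = (j : ℕ) + 1 := rfl

lemma fin_cases3 (m : ℕ) (i : Fin (m + 2)) :
    i = 0 ∨ i = Fin.last (m + 1) ∨ ∃ j : Fin m, i = midIdx m j := by
  have hi := i.isLt
  by_cases h0 : (i : ℕ) = 0
  · left; exact Fin.ext h0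
  · by_cases h1 : (i : ℕ) = m + 1
    · right; left; exact Fin.ext h1
    · right; right
      refine ⟨⟨(i : ℕ) - 1, by omega⟩, Fin.ext ?_⟩
      simp [midIdx_val]
      omega

lemma sum_split (m : ℕ) (g : Fin (m + 2) → ℝ) :
    ∑ i, g i = g 0 + (∑ j : Fin m, g (midIdx m j)) + g (Fin.last (m + 1)) := by
  rw [Fin.sum_univ_succ, Fin.sum_univ_castSucc]
  have h1 : ∀ j : Fin m, g (Fin.succ (Fin.castSucc j)) = g (midIdx m j) := by
    intro j; congr 1
  have h2 : g (Fin.succ (Fin.last m)) = g (Fin.last (m + 1)) := by congr 1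
  rw [h2, Finset.sum_congr rfl (fun j _ => h1 j)]
  ring

lemma avec_zero (m : ℕ) (w : Fin m → ℤ) : avec m w 0 = eps := by
  simp [avec]

lemma avec_last (m : ℕ) (w : Fin m → ℤ) : avec m w (Fin.last (m+1)) = Mval m w := by
  simp [avec, Fin.last]

lemma avec_mid (m : ℕ) (w : Fin m → ℤ) (j : Fin m) : avec m w (midIdx m j) = (w j : ℝ) := by
  have h0 : ((midIdx m j : Fin (m+2)) : ℕ) ≠ 0 := by simp [midIdx_val]
  have h1 : ((midIdx m j : Fin (m+2)) : ℕ) ≠ m + 1 := by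
    rw [midIdx_val]; omega
  rw [avec, dif_neg h0, dif_neg h1]
  congr 1

lemma dvec_zero (m : ℕ) (w : Fin m → ℤ) : dvec m w 0 = -Mval m w := by
  simp [dvec]

lemma dvec_last (m : ℕ) (w : Fin m → ℤ) : dvec m w (Fin.last (m+1)) = eps := by
  simp [dvec, Fin.last]

lemma dvec_mid (m : ℕ) (w : Fin m → ℤ) (j : Fin m) : dvec m w (midIdx m j) = -(w j : ℝ) := by
  have h0 : ((midIdx m j : Fin (m+2)) : ℕ) ≠ 0 := by simp [midIdx_val]
  have h1 : ((midIdx m j : Fin (m+2)) : ℕ) ≠ m + 1 := by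
    rw [midIdx_val]; omega
  rw [dvec, dif_neg h0, dif_neg h1]
  congr 2


section MainLemmas

variable (m : ℕ) (w : Fin m → ℤ)

lemma apos (hw : ∀ i, 1 ≤ w i) : ∀ i, 0 < avec m w i := by
  intro i
  have hsum : (0:ℝ) ≤ ∑ i, (w i : ℝ) :=
    Finset.sum_nonneg fun i _ => by
      have : (1:ℝ) ≤ (w i : ℝ) := by exact_mod_cast hw i
      linarith
  rcases fin_cases3 m i with rfl | rfl | ⟨j, rfl⟩
  · rw [avec_zero]; norm_num [eps]
  · rw [avec_last, Mval]; norm_num [eps]; linarith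
  · rw [avec_mid]
    have : (1:ℝ) ≤ (w j : ℝ) := by exact_mod_cast hw j
    linarith

lemma sum_avec : ∑ i, avec m w i = eps + (∑ i, (w i : ℝ)) + Mval m w := by
  have h := sum_split m (avec m w)
  simp only [avec_zero, avec_last] at h
  rw [h]
  have : ∑ j : Fin m, avec m w (midIdx m j) = ∑ j, (w j : ℝ) :=
    Finset.sum_congr rfl fun j _ => avec_mid m w j
  rw [this]

set_option maxHeartbeats 1000000 in
/-- The key lower bound: every adversarial value is at least the claimed formula. -/
lemma lowerBound (W : ℤ) (hw : ∀ i, 1 ≤ w i)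
    (hW1 : 1 ≤ W) (hW2 : W ≤ (∑ i, w i) - 1)
    (hno : ¬ isSubsetSum m w (W : ℝ))
    (V : ℝ) (hVW : V < (W : ℝ))
    (hVmax : ∀ V' : ℝ, isSubsetSum m w V' → V' < (W : ℝ) → V' ≤ V)
    (hV0 : 0 ≤ V)
    (b : ℝ) (hb1 : (W:ℝ) ≤ b) (hb2 : b ≤ (W:ℝ) + 2 * eps)
    (c x : Fin (m+2) → ℝ) (hc : inU m w c) (hopt : optimalKP (avec m w) c b x) :
    -Mval m w - V + eps / Mval m w * (b - V - eps) ≤ ∑ i, dvec m w i * x i := by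
  classical
  have heps : eps = 1/4 := rfl
  set sumR := ∑ i, (w i : ℝ) with hsumR
  have hWle : (W:ℝ) ≤ sumR - 1 := by
    have : ((W:ℝ)) ≤ ((((∑ i, w i) - 1 : ℤ)):ℝ) := by exact_mod_cast hW2
    push_cast at this
    linarith
  have hW1R : (1:ℝ) ≤ (W:ℝ) := by exact_mod_cast hW1
  have hMdef : Mval m w = sumR + 1/4 := rfl
  have hMpos : 0 < Mval m w := by rw [hMdef]; linarith
  have hap := apos m w hw
  -- ratios
  set K : Fin (m+2) → ℝ := fun i => c i / avec m w i with hKdef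
  have hK : ∀ i, c i = K i * avec m w i := fun i =>
    (div_mul_cancel₀ _ (ne_of_gt (hap i))).symm
  have hKalt : ∀ i, K i = ((i : ℕ) + 1 : ℝ) ∨ K i = ((m:ℝ) + 2 + ((i : ℕ) + 1)) := by
    intro i
    rcases hc i with h | h
    · left
      show c i / avec m w i = _
      rw [h, mul_div_assoc, div_self (ne_of_gt (hap i)), mul_one]
    · right
      show c i / avec m w i = _
      rw [h, mul_div_assoc, div_self (ne_of_gt (hap i)), mul_one]
  have hcpos : ∀ i, 0 < c i := by
    intro i
    rw [hK i]
    have hKpos : 0 < K i := by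
      rcases hKalt i with h | h <;> rw [h] <;> positivity
    exact mul_pos hKpos (hap i)
  have hbsum : b < ∑ i, avec m w i := by
    rw [sum_avec]
    rw [hMdef]
    linarith [heps]
  have ht := tightKP hap hcpos hbsum hopt
  have hbox := hopt.1.2
  have exch : ∀ i j : Fin (m+2), K j < K i → 0 < x j → x i = 1 := by
    intro i j hkk hxj
    refine exchangeKP hap hopt ?_ hxj
    rw [hK i, hK j]
    nlinarith [hap i, hap j, mul_pos (hap i) (hap j)]
  -- last coordinate strictly below 1
  have hXL1 : x (Fin.last (m+1)) < 1 := by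
    have hle : avec m w (Fin.last (m+1)) * x (Fin.last (m+1)) ≤ ∑ i, avec m w i * x i :=
      Finset.single_le_sum (f := fun i => avec m w i * x i)
        (fun i _ => mul_nonneg (hap i).le (hbox i).1) (Finset.mem_univ _)
    rw [avec_last, ht] at hle
    nlinarith
  have hXL0 : 0 ≤ x (Fin.last (m+1)) := (hbox _).1
  -- the value identity
  have hsplita := sum_split m (fun i => avec m w i * x i)
  simp only [avec_zero, avec_last] at hsplita
  have hiden : ∑ i, dvec m w i * x i
      = -b + (eps - Mval m w) * x 0 + (Mval m w + eps) * x (Fin.last (m+1)) := by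
    have h1 := sum_split m (fun i => dvec m w i * x i + avec m w i * x i)
    simp only [dvec_zero, avec_zero, dvec_last, avec_last] at h1
    have hmid : (∑ j : Fin m, (dvec m w (midIdx m j) * x (midIdx m j)
        + avec m w (midIdx m j) * x (midIdx m j))) = 0 :=
      Finset.sum_eq_zero fun j _ => by rw [dvec_mid, avec_mid]; ring
    rw [Finset.sum_add_distrib, ht, hmid] at h1
    linarith
  -- K values at the endpoints
  have hK0 : K 0 = (1:ℝ) ∨ K 0 = (m:ℝ) + 3 := by
    rcases hKalt 0 with h | h
    · left; rw [h, show ((0 : Fin (m+2)) : ℕ) = 0 from rfl]; norm_num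
    · right; rw [h, show ((0 : Fin (m+2)) : ℕ) = 0 from rfl]; push_cast; ring
  have hKL : K (Fin.last (m+1)) = (m:ℝ) + 2 ∨ K (Fin.last (m+1)) = 2*(m:ℝ) + 4 := by
    rcases hKalt (Fin.last (m+1)) with h | h
    · left; rw [h]; simp [Fin.val_last]; push_cast; ring
    · right; rw [h]; simp [Fin.val_last]; push_cast; ring
  have hKmid : ∀ j : Fin m, K (midIdx m j) = (j:ℕ) + 2 ∨ K (midIdx m j) = (m:ℝ) + (j:ℕ) + 4 := by
    intro j
    rcases hKalt (midIdx m j) with h | h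
    · left; rw [h]; simp [midIdx_val]; push_cast; ring
    · right; rw [h]; simp [midIdx_val]; push_cast; ring
  -- helper converting binary middle coordinates into a subset sum
  have binCase : (∀ j : Fin m, x (midIdx m j) = 0 ∨ x (midIdx m j) = 1) →
      ∃ T : Finset (Fin m),
        (∑ j : Fin m, avec m w (midIdx m j) * x (midIdx m j)) = ∑ j ∈ T, (w j : ℝ) := by
    intro hbin
    refine ⟨Finset.univ.filter (fun j => x (midIdx m j) = 1), ?_⟩
    rw [← Finset.sum_filter_add_sum_filter_not Finset.univ (fun j => x (midIdx m j) = 1)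
      (fun j => avec m w (midIdx m j) * x (midIdx m j))]
    have hA : ∑ j ∈ Finset.univ.filter (fun j => x (midIdx m j) = 1),
        avec m w (midIdx m j) * x (midIdx m j)
        = ∑ j ∈ Finset.univ.filter (fun j => x (midIdx m j) = 1), (w j : ℝ) :=
      Finset.sum_congr rfl fun j hj => by
        rw [avec_mid, (Finset.mem_filter.mp hj).2, mul_one]
    have hB : ∑ j ∈ Finset.univ.filter (fun j => ¬ x (midIdx m j) = 1),
        avec m w (midIdx m j) * x (midIdx m j) = 0 :=
      Finset.sum_eq_zero fun j hj => by
        have hne := (Finset.mem_filter.mp hj).2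
        rcases hbin j with h | h
        · rw [h, mul_zero]
        · exact absurd h hne
    rw [hA, hB, add_zero]
  -- a subset sum strictly below W is at most V
  have ssBound : ∀ T : Finset (Fin m), (∑ j ∈ T, (w j : ℝ)) ≤ (W:ℝ) + 1/4 →
      (∑ j ∈ T, (w j : ℝ)) ≤ V := by
    intro T hT
    have hcast : ((∑ j ∈ T, w j : ℤ) : ℝ) = ∑ j ∈ T, (w j : ℝ) := by push_cast; rfl
    have hZ : (∑ j ∈ T, w j) < W + 1 := by
      have : ((∑ j ∈ T, w j : ℤ) : ℝ) < ((W + 1 : ℤ) : ℝ) := by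
        rw [hcast]; push_cast; linarith
      exact_mod_cast this
    have hne : (∑ j ∈ T, w j) ≠ W := by
      intro h
      exact hno ⟨T, by rw [← h]; exact hcast⟩
    have hltW : ((∑ j ∈ T, w j : ℤ) : ℝ) < (W:ℝ) := by
      have : (∑ j ∈ T, w j) < W := by omega
      exact_mod_cast this
    rw [hcast] at hltW
    exact hVmax _ ⟨T, rfl⟩ hltW
  rw [hiden]
  -- main case analysis on x 0
  rcases eq_or_lt_of_le (hbox 0).2 with hx0 | hx0
  · -- x 0 = 1
    by_cases hfrac : ∃ j : Fin m, 0 < x (midIdx m j) ∧ x (midIdx m j) < 1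
    · exfalso
      obtain ⟨j, hj1, hj2⟩ := hfrac
      have hjm : ((j:ℕ) : ℝ) < (m:ℝ) := by exact_mod_cast j.isLt
      rcases hKL with hL | hL
      · rcases hKmid j with hm | hm
        · -- K mid = j+2 < m+2 = K last, x mid > 0 → x last = 1, contra
          have : x (Fin.last (m+1)) = 1 := exch _ _ (by rw [hL, hm]; linarith) hj1
          linarith
        · -- K mid = m+j+4 > K 0 (≤ m+3), x 0 > 0 → x mid = 1, contra
          have hx0pos : 0 < x 0 := by rw [hx0]; norm_num
          have : x (midIdx m j) = 1 := by
            refine exch _ _ ?_ hx0pos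
            rcases hK0 with h0 | h0 <;> rw [h0, hm] <;> nlinarith [(j:ℕ).cast_nonneg (α := ℝ)]
          linarith
      · -- K last = 2m+4 > K mid always
        have : x (Fin.last (m+1)) = 1 := by
          refine exch _ _ ?_ hj1
          rcases hKmid j with hm | hm <;> rw [hL, hm] <;> linarith
        linarith
    · -- all middle coordinates binary
      push_neg at hfrac
      have hbin : ∀ j : Fin m, x (midIdx m j) = 0 ∨ x (midIdx m j) = 1 := by
        intro j
        rcases eq_or_lt_of_le (hbox (midIdx m j)).1 with h | h
        · left; exact h.symm
        · right; exact le_antisymm (hbox (midIdx m j)).2 (hfrac j h)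
      obtain ⟨T, hT⟩ := binCase hbin
      rw [hT, hx0] at hsplita
      -- hsplita : ∑ avec * x = eps * 1 + ∑_T w + M * XL ... direction check below
      have hVpp : (∑ j ∈ T, (w j : ℝ)) ≤ V := by
        apply ssBound
        nlinarith [mul_nonneg hMpos.le hXL0, ht, hsplita]
      have hMXL : b - eps - V ≤ Mval m w * x (Fin.last (m+1)) := by
        nlinarith [ht, hsplita]
      have hXLge : (b - eps - V) / Mval m w ≤ x (Fin.last (m+1)) :=
        (div_le_iff₀ hMpos).mpr (by linarith [hMXL, mul_comm (Mval m w) (x (Fin.last (m+1)))])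
      have hrw : -Mval m w - V + eps / Mval m w * (b - V - eps)
          = -b + (eps - Mval m w) * 1 + (Mval m w + eps) * ((b - eps - V) / Mval m w) := by
        field_simp
        ring
      rw [hrw, hx0]
      have := mul_le_mul_of_nonneg_left hXLge (by linarith : (0:ℝ) ≤ Mval m w + eps)
      linarith
  · -- x 0 < 1
    rcases eq_or_lt_of_le (hbox 0).1 with hx00 | hx00
    · -- x 0 = 0
      rw [← hx00]
      have h1 : eps / Mval m w * (b - V - eps) ≤ eps := by
        rw [div_mul_eq_mul_div, div_le_iff₀ hMpos]
        nlinarith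
      nlinarith [mul_nonneg (by linarith : (0:ℝ) ≤ Mval m w + eps) hXL0]
    · -- 0 < x 0 < 1 : impossible
      exfalso
      -- first show K 0 = m+3 and K last = m+2, x last = 0, middles binary
      have hK0' : K 0 = (m:ℝ) + 3 := by
        rcases hK0 with h0 | h0
        · exfalso
          rcases hKL with hL | hL
          · have : x (Fin.last (m+1)) = 1 := exch _ _ (by rw [hL, h0]; linarith) hx00
            linarith
          · have : x (Fin.last (m+1)) = 1 := exch _ _ (by rw [hL, h0]; linarith) hx00
            linarith
        · exact h0
      have hKL' : K (Fin.last (m+1)) = (m:ℝ) + 2 := by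
        rcases hKL with hL | hL
        · exact hL
        · exfalso
          have : x (Fin.last (m+1)) = 1 := exch _ _ (by rw [hL, hK0']; linarith) hx00
          linarith
      have hXLzero : x (Fin.last (m+1)) = 0 := by
        rcases eq_or_lt_of_le hXL0 with h | h
        · exact h.symm
        · exfalso
          have : x 0 = 1 := exch _ _ (by rw [hK0', hKL']; linarith) h
          linarith
      have hbin : ∀ j : Fin m, x (midIdx m j) = 0 ∨ x (midIdx m j) = 1 := by
        intro j
        have hjm : ((j:ℕ) : ℝ) < (m:ℝ) := by exact_mod_cast j.isLt
        rcases hKmid j with hm | hm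
        · left
          rcases eq_or_lt_of_le (hbox (midIdx m j)).1 with h | h
          · exact h.symm
          · exfalso
            have : x 0 = 1 := exch _ _ (by rw [hK0', hm]; linarith) h
            linarith
        · right
          exact exch _ _ (by rw [hK0', hm]; nlinarith [(j:ℕ).cast_nonneg (α := ℝ)]) hx00
      obtain ⟨T, hT⟩ := binCase hbin
      rw [hT, hXLzero] at hsplita
      -- now b = eps * x 0 + ∑_T w, with 0 < x 0 < 1
      have hcast : ((∑ j ∈ T, w j : ℤ) : ℝ) = ∑ j ∈ T, (w j : ℝ) := by push_cast; rfl
      have hlow : (W:ℝ) - 1/4 < ∑ j ∈ T, (w j : ℝ) := by nlinarith [ht, hsplita]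
      have hhigh : (∑ j ∈ T, (w j : ℝ)) < (W:ℝ) + 3/4 := by nlinarith [ht, hsplita]
      have hZeq : (∑ j ∈ T, w j) = W := by
        have h1 : ((∑ j ∈ T, w j : ℤ) : ℝ) < ((W + 1 : ℤ) : ℝ) := by
          rw [hcast]; push_cast; linarith
        have h2 : ((W - 1 : ℤ) : ℝ) < ((∑ j ∈ T, w j : ℤ) : ℝ) := by
          rw [hcast]; push_cast; linarith
        have h1' : (∑ j ∈ T, w j) < W + 1 := by exact_mod_cast h1
        have h2' : W - 1 < (∑ j ∈ T, w j) := by exact_mod_cast h2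
        omega
      exact hno ⟨T, by rw [← hZeq]; exact hcast⟩

set_option maxHeartbeats 1000000 in
/-- Achievability: the claimed value is attained by an explicit adversarial choice. -/
lemma achieve (W : ℤ) (hw : ∀ i, 1 ≤ w i)
    (hW1 : 1 ≤ W) (hW2 : W ≤ (∑ i, w i) - 1)
    (V : ℝ) (S0 : Finset (Fin m)) (hS0 : V = ∑ i ∈ S0, (w i : ℝ))
    (hV0 : 0 ≤ V) (hVle : V ≤ (W:ℝ) - 1)
    (b : ℝ) (hb1 : (W:ℝ) ≤ b) (hb2 : b ≤ (W:ℝ) + 2 * eps) :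
    ∃ c x : Fin (m+2) → ℝ, inU m w c ∧ optimalKP (avec m w) c b x ∧
      ∑ i, dvec m w i * x i = -Mval m w - V + eps / Mval m w * (b - V - eps) := by
  classical
  have heps : eps = 1/4 := rfl
  set sumR := ∑ i, (w i : ℝ) with hsumR
  have hWle : (W:ℝ) ≤ sumR - 1 := by
    have h : ((W:ℝ)) ≤ ((((∑ i, w i) - 1 : ℤ)):ℝ) := by exact_mod_cast hW2
    push_cast at h
    linarith
  have hW1R : (1:ℝ) ≤ (W:ℝ) := by exact_mod_cast hW1
  have hMdef : Mval m w = sumR + 1/4 := rfl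
  have hMpos : 0 < Mval m w := by rw [hMdef]; linarith
  have hap := apos m w hw
  set Hi : Fin (m+2) → Prop := fun i => (i:ℕ) = 0 ∨ ∃ j ∈ S0, (i:ℕ) = (j:ℕ) + 1 with hHi
  set cs : Fin (m+2) → ℝ := fun i =>
    if Hi i then ((m + 2) + ((i : ℕ) + 1)) * avec m w i
    else ((i : ℕ) + 1) * avec m w i with hcs
  set xs : Fin (m+2) → ℝ := fun i =>
    if (i:ℕ) = m+1 then (b - eps - V)/Mval m w else if Hi i then 1 else 0 with hxs
  have hHi0 : Hi 0 := Or.inl rfl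
  have hHiL : ¬ Hi (Fin.last (m+1)) := by
    rintro (h | ⟨j, hj, h⟩)
    · rw [Fin.val_last] at h; omega
    · rw [Fin.val_last] at h; have := j.isLt; omega
  have hHimid : ∀ j : Fin m, Hi (midIdx m j) ↔ j ∈ S0 := by
    intro j
    constructor
    · rintro (h | ⟨j', hj', h⟩)
      · rw [midIdx_val] at h; omega
      · rw [midIdx_val] at h
        have hjj : j' = j := Fin.ext (by omega)
        rwa [← hjj]
    · intro h; exact Or.inr ⟨j, h, (midIdx_val m j)⟩
  have hxs0 : xs 0 = 1 := by
    simp only [hxs]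
    rw [if_neg (by rw [show ((0 : Fin (m+2)) : ℕ) = 0 from rfl]; omega), if_pos hHi0]
  have hxsL : xs (Fin.last (m+1)) = (b - eps - V)/Mval m w := by
    simp only [hxs]
    rw [if_pos (Fin.val_last _)]
  have hxsmid : ∀ j : Fin m, xs (midIdx m j) = if j ∈ S0 then 1 else 0 := by
    intro j
    simp only [hxs]
    rw [if_neg (by rw [midIdx_val]; have := j.isLt; omega)]
    by_cases h : j ∈ S0
    · rw [if_pos ((hHimid j).mpr h), if_pos h]
    · rw [if_neg (fun hh => h ((hHimid j).mp hh)), if_neg h]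
  have hxl0 : 0 ≤ (b - eps - V) / Mval m w := by
    apply div_nonneg _ hMpos.le
    linarith
  have hxl1 : (b - eps - V) / Mval m w ≤ 1 := by
    rw [div_le_one hMpos]
    linarith
  have hmidsum : ∑ j : Fin m, avec m w (midIdx m j) * xs (midIdx m j) = V := by
    rw [Finset.sum_congr rfl (fun j _ => by rw [avec_mid, hxsmid])]
    simp only [mul_ite, mul_one, mul_zero]
    rw [Finset.sum_ite_mem, Finset.univ_inter, hS0]
  have htight : ∑ i, avec m w i * xs i = b := by
    have h := sum_split m (fun i => avec m w i * xs i)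
    simp only [avec_zero, avec_last] at h
    rw [h, hxs0, hxsL, hmidsum, mul_div_cancel₀ _ (ne_of_gt hMpos)]
    ring
  have hfeas : feasibleKP (avec m w) b xs := by
    refine ⟨le_of_eq htight, ?_⟩
    intro i
    rcases fin_cases3 m i with rfl | rfl | ⟨j, rfl⟩
    · rw [hxs0]; norm_num
    · rw [hxsL]; exact ⟨hxl0, hxl1⟩
    · rw [hxsmid]; by_cases h : j ∈ S0 <;> simp [h]
  have hinU : inU m w cs := by
    intro i
    by_cases h : Hi i
    · right; simp only [hcs]; rw [if_pos h]
    · left; simp only [hcs]; rw [if_neg h]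
  have hoptx : optimalKP (avec m w) cs b xs := by
    refine certificateKP (r := (m:ℝ) + 2) (by positivity) hfeas htight ?_
    intro i
    rcases fin_cases3 m i with rfl | rfl | ⟨j, rfl⟩
    · refine ⟨fun _ => hxs0, fun hlt => ?_⟩
      exfalso
      have hc0 : cs 0 = ((m + 2 : ℝ) + (((0 : Fin (m+2)) : ℕ) + 1)) * avec m w 0 := by
        simp only [hcs]; rw [if_pos hHi0]
      rw [hc0, show ((0 : Fin (m+2)) : ℕ) = 0 from rfl] at hlt
      push_cast at hlt
      nlinarith [hap 0]
    · have hcL : cs (Fin.last (m+1))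
          = ((((Fin.last (m+1) : Fin (m+2)) : ℕ) + 1 : ℝ)) * avec m w (Fin.last (m+1)) := by
        simp only [hcs]; rw [if_neg hHiL]
      constructor
      · intro hlt; exfalso
        rw [hcL, Fin.val_last] at hlt
        push_cast at hlt
        nlinarith [hap (Fin.last (m+1))]
      · intro hlt; exfalso
        rw [hcL, Fin.val_last] at hlt
        push_cast at hlt
        nlinarith [hap (Fin.last (m+1))]
    · by_cases h : j ∈ S0
      · refine ⟨fun _ => by rw [hxsmid, if_pos h], fun hlt => ?_⟩
        exfalso
        have hcm : cs (midIdx m j)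
            = ((m + 2 : ℝ) + (((midIdx m j : Fin (m+2)) : ℕ) + 1)) * avec m w (midIdx m j) := by
          simp only [hcs]; rw [if_pos ((hHimid j).mpr h)]
        rw [hcm, midIdx_val] at hlt
        push_cast at hlt
        nlinarith [hap (midIdx m j), (j:ℕ).cast_nonneg (α := ℝ)]
      · refine ⟨fun hlt => ?_, fun _ => by rw [hxsmid, if_neg h]⟩
        exfalso
        have hcm : cs (midIdx m j)
            = ((((midIdx m j : Fin (m+2)) : ℕ) + 1 : ℝ)) * avec m w (midIdx m j) := by
          simp only [hcs]; rw [if_neg (fun hh => h ((hHimid j).mp hh))]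
        rw [hcm, midIdx_val] at hlt
        have hjm : ((j:ℕ) : ℝ) < (m:ℝ) := by exact_mod_cast j.isLt
        push_cast at hlt
        nlinarith [hap (midIdx m j)]
  refine ⟨cs, xs, hinU, hoptx, ?_⟩
  have h := sum_split m (fun i => dvec m w i * xs i)
  simp only [dvec_zero, dvec_last] at h
  have hmidsum' : ∑ j : Fin m, dvec m w (midIdx m j) * xs (midIdx m j) = -V := by
    rw [Finset.sum_congr rfl (fun j _ => by rw [dvec_mid, hxsmid])]
    simp only [neg_mul, mul_ite, mul_one, mul_zero]
    rw [Finset.sum_ite_mem, Finset.univ_inter, hS0, ← Finset.sum_neg_distrib]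
  rw [h, hxs0, hxsL, hmidsum']
  field_simp
  ring

end MainLemmas

/-- If `W` is not a subset sum, then on `[W, W + 2ε]` the leader's objective of
the discrete uncorrelated reduction instance is the affine function
`−M − V + (ε/M)(b − V − ε)` (with `V` the largest subset sum below `W`); in
particular it is strictly increasing there, with unique maximizer `W + 2ε`. -/
theorem discrete_uncorrelated_no_instance
    (m : ℕ) (w : Fin m → ℤ) (W : ℤ) (hw : ∀ i, 1 ≤ w i)
    (hW1 : 1 ≤ W) (hW2 : W ≤ (∑ i, w i) - 1)
    (hno : ¬ isSubsetSum m w (W : ℝ))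
    (V : ℝ) (hV : isSubsetSum m w V) (hVW : V < (W : ℝ))
    (hVmax : ∀ V' : ℝ, isSubsetSum m w V' → V' < (W : ℝ) → V' ≤ V) :
    (∀ b ∈ Set.Icc (W : ℝ) ((W : ℝ) + 2 * eps),
      fval m w b = -Mval m w - V + eps / Mval m w * (b - V - eps)) ∧
    StrictMonoOn (fval m w) (Set.Icc (W : ℝ) ((W : ℝ) + 2 * eps)) ∧
    (∀ b ∈ Set.Icc (W : ℝ) ((W : ℝ) + 2 * eps), b ≠ (W : ℝ) + 2 * eps →
      fval m w b < fval m w ((W : ℝ) + 2 * eps)) := by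
  classical
  have heps : eps = 1/4 := rfl
  obtain ⟨S0, hS0⟩ := hV
  have hW1R : (1:ℝ) ≤ (W:ℝ) := by exact_mod_cast hW1
  have hV0 : 0 ≤ V := hVmax 0 ⟨∅, by simp⟩ (by linarith)
  have hVle : V ≤ (W:ℝ) - 1 := by
    have hcast : ((∑ j ∈ S0, w j : ℤ) : ℝ) = V := by rw [hS0]; push_cast; rfl
    have h1 : ((∑ j ∈ S0, w j : ℤ) : ℝ) < (W:ℝ) := by rw [hcast]; exact hVW
    have h2 : (∑ j ∈ S0, w j) < W := by exact_mod_cast h1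
    have h3 : (∑ j ∈ S0, w j) ≤ W - 1 := by omega
    have h4 : ((∑ j ∈ S0, w j : ℤ) : ℝ) ≤ ((W - 1 : ℤ) : ℝ) := by exact_mod_cast h3
    rw [hcast] at h4
    push_cast at h4
    linarith
  have hWle : (W:ℝ) ≤ (∑ i, (w i : ℝ)) - 1 := by
    have h : ((W:ℝ)) ≤ ((((∑ i, w i) - 1 : ℤ)):ℝ) := by exact_mod_cast hW2
    push_cast at h
    linarith
  have hMpos : 0 < Mval m w := by
    rw [Mval, heps]; linarith
  have hform : ∀ b ∈ Set.Icc (W:ℝ) ((W:ℝ) + 2*eps),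
      fval m w b = -Mval m w - V + eps / Mval m w * (b - V - eps) := by
    intro b hb
    obtain ⟨c, x, hcU, hopt, hval⟩ :=
      achieve m w W hw hW1 hW2 V S0 hS0 hV0 hVle b hb.1 hb.2
    refine IsLeast.csInf_eq ⟨⟨c, x, hcU, hopt, hval.symm⟩, ?_⟩
    rintro v ⟨c', x', hcU', hopt', rfl⟩
    exact lowerBound m w W hw hW1 hW2 hno V hVW hVmax hV0 b hb.1 hb.2 c' x' hcU' hopt'
  have hmono : StrictMonoOn (fval m w) (Set.Icc (W:ℝ) ((W:ℝ) + 2*eps)) := by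
    intro b1 hb1 b2 hb2 hlt
    rw [hform b1 hb1, hform b2 hb2]
    have hpos : 0 < eps / Mval m w := div_pos (by norm_num [eps]) hMpos
    have hmul := mul_lt_mul_of_pos_left
      (show b1 - V - eps < b2 - V - eps by linarith) hpos
    linarith
  refine ⟨hform, hmono, ?_⟩
  intro b hb hne
  have hend : (W:ℝ) + 2*eps ∈ Set.Icc (W:ℝ) ((W:ℝ)+2*eps) :=
    Set.right_mem_Icc.mpr (by norm_num [eps])
  exact hmono hb hend (lt_of_le_of_ne hb.2 hne)


end
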